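/- Let $n \ge 2$ and let $h = (h_{ij})$ be a symmetric $n \times n$ real matrix. Set $S = \sum_{i,j=1}^{n} h_{ij}^2$ and $T = \sum_{i=1}^{n} h_{ii}$. Then $2 h_{11} h_{22} \ge \sum_{i \ne j} h_{ij}^2 + \frac{T^2}{n-1} - S$. -/

import Mathlib

/-- Key algebraic inequality from the proof of Lemma 4.1: for a symmetric
`n × n` real matrix `h` (`n ≥ 2`), with `S = ∑ h_{ij}²` and `T = ∑ h_{ii}`,
one has `2 h₁₁ h₂₂ ≥ ∑_{i ≠ j} h_{ij}² + T²/(n-1) - S`. -/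
theorem two_mul_h11_h22_ge (n : ℕ) (hn : 2 ≤ n) (h : Fin n → Fin n → ℝ)
    (hsymm : ∀ i j, h i j = h j i)
    (S : ℝ) (hS : S = ∑ i, ∑ j, (h i j) ^ 2)
    (T : ℝ) (hT : T = ∑ i, h i i) :
    2 * h ⟨0, by omega⟩ ⟨0, by omega⟩ * h ⟨1, by omega⟩ ⟨1, by omega⟩ ≥
      (∑ i, ∑ j, if i ≠ j then (h i j) ^ 2 else 0) + T ^ 2 / (n - 1) - S := by
  set i0 : Fin n := ⟨0, by omega⟩ with hi0
  set i1 : Fin n := ⟨1, by omega⟩ with hi1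
  have hne : i1 ≠ i0 := by simp [hi0, hi1, Fin.ext_iff]
  set s : Finset (Fin n) := Finset.univ.erase i0 with hs
  have hi1s : i1 ∈ s := by simp [hs, hne]
  set f : Fin n → ℝ := fun i => if i = i1 then h i0 i0 + h i1 i1 else h i i with hf
  -- sum of f over s equals T
  have hsum : ∑ i ∈ s, f i = T := by
    rw [hT, ← Finset.add_sum_erase _ f hi1s,
      ← Finset.add_sum_erase _ (fun i => h i i) (Finset.mem_univ i0),
      ← Finset.add_sum_erase _ (fun i => h i i) hi1s]
    have : ∑ i ∈ s.erase i1, f i = ∑ i ∈ s.erase i1, h i i := by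
      refine Finset.sum_congr rfl fun i hi => ?_
      have : i ≠ i1 := Finset.ne_of_mem_erase hi
      simp [hf, this]
    rw [this]; simp [hf]; ring
  -- sum of f² over s
  have hsq : ∑ i ∈ s, f i ^ 2 = (∑ i, h i i ^ 2) + 2 * h i0 i0 * h i1 i1 := by
    rw [← Finset.add_sum_erase _ (fun i => f i ^ 2) hi1s,
      ← Finset.add_sum_erase _ (fun i => h i i ^ 2) (Finset.mem_univ i0),
      ← Finset.add_sum_erase _ (fun i => h i i ^ 2) hi1s]
    have : ∑ i ∈ s.erase i1, f i ^ 2 = ∑ i ∈ s.erase i1, h i i ^ 2 := by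
      refine Finset.sum_congr rfl fun i hi => ?_
      have : i ≠ i1 := Finset.ne_of_mem_erase hi
      simp [hf, this]
    rw [this]; simp [hf]; ring
  have hcard : (s.card : ℝ) = (n : ℝ) - 1 := by
    have : s.card = n - 1 := by
      simp [hs, Finset.card_erase_of_mem]
    rw [this]
    have : (1 : ℕ) ≤ n := by omega
    push_cast [Nat.cast_sub this]
    ring
  have key : T ^ 2 ≤ ((n : ℝ) - 1) * ((∑ i, h i i ^ 2) + 2 * h i0 i0 * h i1 i1) := by
    have := sq_sum_le_card_mul_sum_sq (s := s) (f := f)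
    rw [hsum, hsq, hcard] at this
    exact this
  have hpos : (0 : ℝ) < (n : ℝ) - 1 := by
    have : (2 : ℝ) ≤ (n : ℝ) := by exact_mod_cast hn
    linarith
  have hdiv : T ^ 2 / ((n : ℝ) - 1) ≤ (∑ i, h i i ^ 2) + 2 * h i0 i0 * h i1 i1 :=
    (div_le_iff₀ hpos).mpr (by rw [mul_comm]; exact key)
  -- decompose S
  have hdec : S = (∑ i, ∑ j, if i ≠ j then (h i j) ^ 2 else 0) + ∑ i, h i i ^ 2 := by
    rw [hS, ← Finset.sum_add_distrib]
    refine Finset.sum_congr rfl fun i _ => ?_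
    have : ∑ j, (h i j) ^ 2
        = ∑ j, ((if i ≠ j then (h i j) ^ 2 else 0) + (if i = j then (h i j) ^ 2 else 0)) := by
      refine Finset.sum_congr rfl fun j _ => ?_
      by_cases hij : i = j <;> simp [hij]
    rw [this, Finset.sum_add_distrib, Finset.sum_ite_eq Finset.univ i fun j => (h i j) ^ 2]
    simp
  rw [hdec]
  linarith
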